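/- For the Dubins system, for any two points q₀, q₁ ∈ ℝ³ there exist a time T ≥ 0 and an admissible trajectory q on [0,T] with q(0) = q₀ and q(T) = q₁ (complete controllability). -/

import Mathlib

open MeasureTheory Set

noncomputable section

/-- An admissible trajectory of the Dubins system on `[0, T]`:
a measurable control `(u, v)` with `u t ∈ [-umax, umax]` and `v t ∈ [vmin, vmax]` a.e.,
and a Lipschitz curve `(x, y, θ)` satisfying `x' = v cos θ`, `y' = v sin θ`, `θ' = u` a.e. -/
def DubinsTraj (umax vmin vmax T : ℝ) (x y θ : ℝ → ℝ) (u v : ℝ → ℝ) : Prop :=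
  Measurable u ∧ Measurable v ∧
  (∀ᵐ t ∂volume, t ∈ Icc (0 : ℝ) T → u t ∈ Icc (-umax) umax ∧ v t ∈ Icc vmin vmax) ∧
  (∃ K, LipschitzOnWith K (fun t => (x t, y t, θ t)) (Icc (0 : ℝ) T)) ∧
  (∀ᵐ t ∂volume, t ∈ Icc (0 : ℝ) T →
    HasDerivWithinAt x (v t * Real.cos (θ t)) (Icc (0 : ℝ) T) t ∧
    HasDerivWithinAt y (v t * Real.sin (θ t)) (Icc (0 : ℝ) T) t ∧
    HasDerivWithinAt θ (u t) (Icc (0 : ℝ) T) t)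

open NNReal

lemma curveLip {T : ℝ} {x y θ fx fy fθ : ℝ → ℝ} {C : ℝ}
    (h : ∀ t ∈ Icc (0:ℝ) T,
      HasDerivWithinAt x (fx t) (Icc (0:ℝ) T) t ∧
      HasDerivWithinAt y (fy t) (Icc (0:ℝ) T) t ∧
      HasDerivWithinAt θ (fθ t) (Icc (0:ℝ) T) t)
    (hb : ∀ t ∈ Icc (0:ℝ) T, |fx t| ≤ C ∧ |fy t| ≤ C ∧ |fθ t| ≤ C) :
    ∃ K, LipschitzOnWith K (fun t => (x t, y t, θ t)) (Icc (0:ℝ) T) := by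
  refine ⟨Real.toNNReal C, (convex_Icc (0:ℝ) T).lipschitzOnWith_of_nnnorm_hasDerivWithin_le
    (f' := fun t => (fx t, fy t, fθ t))
    (fun t ht => ((h t ht).1.prodMk ((h t ht).2.1.prodMk (h t ht).2.2))) ?_⟩
  intro t ht
  rw [← NNReal.coe_le_coe, coe_nnnorm, Real.coe_toNNReal']
  obtain ⟨h1, h2, h3⟩ := hb t ht
  simp only [Prod.norm_def, Real.norm_eq_abs, max_le_iff]
  exact ⟨h1.trans (le_max_left _ _), h2.trans (le_max_left _ _), h3.trans (le_max_left _ _)⟩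

def arcX (umax vmin x₀ θ₀ σ : ℝ) : ℝ → ℝ :=
  fun t => x₀ + σ * (vmin/umax) * (Real.sin (θ₀ + σ*umax*t) - Real.sin θ₀)
def arcY (umax vmin y₀ θ₀ σ : ℝ) : ℝ → ℝ :=
  fun t => y₀ - σ * (vmin/umax) * (Real.cos (θ₀ + σ*umax*t) - Real.cos θ₀)
def arcΘ (umax θ₀ σ : ℝ) : ℝ → ℝ := fun t => θ₀ + σ*umax*t

lemma dubins_arc {umax vmin vmax : ℝ} (humax : 0 < umax) (hvmin : 0 < vmin) (hv : vmin ≤ vmax)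
    (x₀ y₀ θ₀ σ τ : ℝ) (hσ : σ = 1 ∨ σ = -1) (hτ : 0 ≤ τ) :
    DubinsTraj umax vmin vmax τ (arcX umax vmin x₀ θ₀ σ) (arcY umax vmin y₀ θ₀ σ)
      (arcΘ umax θ₀ σ) (fun _ => σ*umax) (fun _ => vmin) := by
  have hσ2 : σ * σ = 1 := by rcases hσ with h | h <;> rw [h] <;> norm_num
  have hu : umax ≠ 0 := humax.ne'
  have hd : ∀ t ∈ Icc (0:ℝ) τ,
      HasDerivWithinAt (arcX umax vmin x₀ θ₀ σ) (vmin * Real.cos (arcΘ umax θ₀ σ t)) (Icc (0:ℝ) τ) t ∧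
      HasDerivWithinAt (arcY umax vmin y₀ θ₀ σ) (vmin * Real.sin (arcΘ umax θ₀ σ t)) (Icc (0:ℝ) τ) t ∧
      HasDerivWithinAt (arcΘ umax θ₀ σ) (σ*umax) (Icc (0:ℝ) τ) t := by
    intro t _
    have hΘ : HasDerivAt (arcΘ umax θ₀ σ) (σ*umax) t := by
      unfold arcΘ; simpa using ((hasDerivAt_id t).const_mul (σ*umax)).const_add θ₀
    refine ⟨?_, ?_, hΘ.hasDerivWithinAt⟩
    · have h1 : HasDerivAt (arcX umax vmin x₀ θ₀ σ)
          (σ * (vmin/umax) * (Real.cos (arcΘ umax θ₀ σ t) * (σ*umax))) t := by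
        exact
          ((((Real.hasDerivAt_sin (arcΘ umax θ₀ σ t)).comp t hΘ).sub_const
            (Real.sin θ₀)).const_mul (σ * (vmin/umax))).const_add x₀
      have he : σ * (vmin/umax) * (Real.cos (arcΘ umax θ₀ σ t) * (σ*umax))
          = vmin * Real.cos (arcΘ umax θ₀ σ t) := by
        rcases hσ with h | h <;> subst h <;> field_simp <;> ring
      rw [he] at h1; exact h1.hasDerivWithinAt
    · have h1 : HasDerivAt (arcY umax vmin y₀ θ₀ σ)
          (-(σ * (vmin/umax) * (-Real.sin (arcΘ umax θ₀ σ t) * (σ*umax)))) t := by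
        exact ((((Real.hasDerivAt_cos (arcΘ umax θ₀ σ t)).comp t hΘ).sub_const
            (Real.cos θ₀)).const_mul (σ * (vmin/umax))).const_sub y₀
      have he : -(σ * (vmin/umax) * (-Real.sin (arcΘ umax θ₀ σ t) * (σ*umax)))
          = vmin * Real.sin (arcΘ umax θ₀ σ t) := by
        rcases hσ with h | h <;> subst h <;> field_simp <;> ring
      rw [he] at h1; exact h1.hasDerivWithinAt
  refine ⟨measurable_const, measurable_const, Filter.Eventually.of_forall ?_, ?_, Filter.Eventually.of_forall fun t ht => hd t ht⟩
  · intro t _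
    constructor
    · constructor
      · rcases hσ with h | h <;> subst h <;> simp <;> linarith
      · rcases hσ with h | h <;> subst h <;> simp <;> linarith
    · exact ⟨le_refl _, hv⟩
  · refine curveLip hd (C := vmin + umax) ?_
    intro t _
    have h1 : |Real.cos (arcΘ umax θ₀ σ t)| ≤ 1 := Real.abs_cos_le_one _
    have h2 : |Real.sin (arcΘ umax θ₀ σ t)| ≤ 1 := Real.abs_sin_le_one _
    refine ⟨?_, ?_, ?_⟩
    · calc |vmin * Real.cos (arcΘ umax θ₀ σ t)| = |vmin| * |Real.cos (arcΘ umax θ₀ σ t)| := abs_mul _ _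
        _ ≤ vmin * 1 := by rw [abs_of_pos hvmin]; exact mul_le_mul_of_nonneg_left h1 hvmin.le
        _ ≤ vmin + umax := by linarith
    · calc |vmin * Real.sin (arcΘ umax θ₀ σ t)| = |vmin| * |Real.sin (arcΘ umax θ₀ σ t)| := abs_mul _ _
        _ ≤ vmin * 1 := by rw [abs_of_pos hvmin]; exact mul_le_mul_of_nonneg_left h2 hvmin.le
        _ ≤ vmin + umax := by linarith
    · rcases hσ with h | h <;> subst h <;> simp [abs_of_pos humax] <;> linarith

def lineX (vmin x₀ θ₀ : ℝ) : ℝ → ℝ := fun t => x₀ + vmin * Real.cos θ₀ * t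
def lineY (vmin y₀ θ₀ : ℝ) : ℝ → ℝ := fun t => y₀ + vmin * Real.sin θ₀ * t

lemma dubins_line {umax vmin vmax : ℝ} (humax : 0 < umax) (hvmin : 0 < vmin) (hv : vmin ≤ vmax)
    (x₀ y₀ θ₀ τ : ℝ) :
    DubinsTraj umax vmin vmax τ (lineX vmin x₀ θ₀) (lineY vmin y₀ θ₀)
      (fun _ => θ₀) (fun _ => 0) (fun _ => vmin) := by
  have hd : ∀ t ∈ Icc (0:ℝ) τ,
      HasDerivWithinAt (lineX vmin x₀ θ₀) (vmin * Real.cos θ₀) (Icc (0:ℝ) τ) t ∧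
      HasDerivWithinAt (lineY vmin y₀ θ₀) (vmin * Real.sin θ₀) (Icc (0:ℝ) τ) t ∧
      HasDerivWithinAt (fun _ : ℝ => θ₀) (0:ℝ) (Icc (0:ℝ) τ) t := by
    intro t _
    refine ⟨?_, ?_, (hasDerivAt_const t θ₀).hasDerivWithinAt⟩
    · exact (((hasDerivAt_id t).const_mul (vmin * Real.cos θ₀)).const_add x₀).hasDerivWithinAt.congr_deriv (by simp [mul_one])
    · exact (((hasDerivAt_id t).const_mul (vmin * Real.sin θ₀)).const_add y₀).hasDerivWithinAt.congr_deriv (by simp [mul_one])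
  refine ⟨measurable_const, measurable_const, Filter.Eventually.of_forall ?_, ?_,
    Filter.Eventually.of_forall fun t ht => hd t ht⟩
  · exact fun t _ => ⟨⟨by simpa using neg_nonpos.mpr humax.le, by simpa using humax.le⟩, ⟨le_refl _, hv⟩⟩
  · refine curveLip hd (C := vmin + umax) fun t _ => ⟨?_, ?_, ?_⟩
    · calc |vmin * Real.cos θ₀| = |vmin| * |Real.cos θ₀| := abs_mul _ _
        _ ≤ vmin * 1 := by rw [abs_of_pos hvmin]; exact mul_le_mul_of_nonneg_left (Real.abs_cos_le_one _) hvmin.le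
        _ ≤ vmin + umax := by linarith
    · calc |vmin * Real.sin θ₀| = |vmin| * |Real.sin θ₀| := abs_mul _ _
        _ ≤ vmin * 1 := by rw [abs_of_pos hvmin]; exact mul_le_mul_of_nonneg_left (Real.abs_sin_le_one _) hvmin.le
        _ ≤ vmin + umax := by linarith
    · simp; linarith

lemma glue_left {T₁ T₂ : ℝ} {f₁ f₂ : ℝ → ℝ} {d t : ℝ} (ht : t < T₁)
    (h : HasDerivWithinAt f₁ d (Icc 0 T₁) t) :
    HasDerivWithinAt (fun s => if s ≤ T₁ then f₁ s else f₂ (s - T₁)) d (Icc 0 (T₁+T₂)) t := by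
  have hmem : Iic T₁ ∈ nhdsWithin t (Icc 0 (T₁+T₂)) :=
    mem_nhdsWithin_of_mem_nhds (Iic_mem_nhds ht)
  have h' : HasDerivWithinAt f₁ d (Icc 0 (T₁+T₂)) t := by
    apply h.mono_of_mem_nhdsWithin
    refine Filter.mem_of_superset (Filter.inter_mem self_mem_nhdsWithin hmem) ?_
    rintro s ⟨hs1, hs2⟩; exact ⟨hs1.1, hs2⟩
  refine h'.congr_of_eventuallyEq ?_ (by simp [ht.le])
  filter_upwards [hmem] with s hs
  simp [mem_Iic.mp hs]

lemma glue_right {T₁ T₂ : ℝ} {f₁ f₂ : ℝ → ℝ} {d t : ℝ} (ht : T₁ < t)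
    (h : HasDerivWithinAt f₂ d (Icc 0 T₂) (t - T₁)) :
    HasDerivWithinAt (fun s => if s ≤ T₁ then f₁ s else f₂ (s - T₁)) d (Icc 0 (T₁+T₂)) t := by
  have hg : HasDerivWithinAt (fun s : ℝ => s - T₁) 1 (Icc T₁ (T₁+T₂)) t :=
    ((hasDerivAt_id t).sub_const T₁).hasDerivWithinAt
  have hmaps : MapsTo (fun s : ℝ => s - T₁) (Icc T₁ (T₁+T₂)) (Icc 0 T₂) := by
    rintro s ⟨hs1, hs2⟩
    simp only [mem_Icc]
    constructor <;> linarith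
  have hcomp := h.comp t hg hmaps
  rw [mul_one] at hcomp
  have hmem : Ici T₁ ∈ nhdsWithin t (Icc 0 (T₁+T₂)) :=
    mem_nhdsWithin_of_mem_nhds (Ici_mem_nhds ht)
  have h' : HasDerivWithinAt (f₂ ∘ fun s => s - T₁) d (Icc 0 (T₁+T₂)) t := by
    apply hcomp.mono_of_mem_nhdsWithin
    refine Filter.mem_of_superset (Filter.inter_mem self_mem_nhdsWithin hmem) ?_
    rintro s ⟨hs1, hs2⟩; exact ⟨hs2, hs1.2⟩
  refine h'.congr_of_eventuallyEq ?_ (by simp [not_le.2 ht, Function.comp])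
  have hmem' : Ioi T₁ ∈ nhdsWithin t (Icc 0 (T₁+T₂)) :=
    mem_nhdsWithin_of_mem_nhds (Ioi_mem_nhds ht)
  filter_upwards [hmem'] with s hs
  simp [not_le.2 (mem_Ioi.mp hs), Function.comp]

lemma dubins_concat {umax vmin vmax T₁ T₂ : ℝ} (hT₁ : 0 ≤ T₁) (hT₂ : 0 ≤ T₂)
    {x₁ y₁ θ₁ u₁ v₁ x₂ y₂ θ₂ u₂ v₂ : ℝ → ℝ}
    (h₁ : DubinsTraj umax vmin vmax T₁ x₁ y₁ θ₁ u₁ v₁)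
    (h₂ : DubinsTraj umax vmin vmax T₂ x₂ y₂ θ₂ u₂ v₂)
    (hx : x₁ T₁ = x₂ 0) (hy : y₁ T₁ = y₂ 0) (hθ : θ₁ T₁ = θ₂ 0) :
    ∃ x y θ u v, DubinsTraj umax vmin vmax (T₁ + T₂) x y θ u v ∧
      x 0 = x₁ 0 ∧ y 0 = y₁ 0 ∧ θ 0 = θ₁ 0 ∧
      x (T₁ + T₂) = x₂ T₂ ∧ y (T₁ + T₂) = y₂ T₂ ∧ θ (T₁ + T₂) = θ₂ T₂ := by
  obtain ⟨hu₁m, hv₁m, hb₁, ⟨K₁, hK₁⟩, hd₁⟩ := h₁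
  obtain ⟨hu₂m, hv₂m, hb₂, ⟨K₂, hK₂⟩, hd₂⟩ := h₂
  set G : (ℝ → ℝ) → (ℝ → ℝ) → (ℝ → ℝ) :=
    fun f₁ f₂ => fun t => if t ≤ T₁ then f₁ t else f₂ (t - T₁) with hG
  have hmp : MeasurePreserving (fun t : ℝ => t - T₁) volume volume :=
    measurePreserving_sub_right volume T₁
  have hms : Measurable (fun t : ℝ => t - T₁) := measurable_id.sub measurable_const
  have hGm : ∀ {f₁ f₂ : ℝ → ℝ}, Measurable f₁ → Measurable f₂ → Measurable (G f₁ f₂) := by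
    intro f₁ f₂ hm1 hm2
    exact Measurable.ite measurableSet_Iic hm1 (hm2.comp hms)
  have hb₂' := hmp.quasiMeasurePreserving.ae hb₂
  have hd₂' := hmp.quasiMeasurePreserving.ae hd₂
  have hne : ∀ᵐ t : ℝ ∂volume, t ≠ T₁ := by
    rw [ae_iff]
    simp only [ne_eq, not_not, setOf_eq_eq_singleton]
    exact measure_singleton T₁
  have hend : ∀ f₁ f₂ : ℝ → ℝ, f₁ T₁ = f₂ 0 → G f₁ f₂ (T₁ + T₂) = f₂ T₂ := by
    intro f₁ f₂ hf
    by_cases hc : T₁ + T₂ ≤ T₁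
    · have h0 : T₂ = 0 := le_antisymm (by linarith) hT₂
      subst h0
      simp only [hG, add_zero, if_pos le_rfl, hf]
    · simp only [hG, if_neg hc, add_sub_cancel_left]
  refine ⟨G x₁ x₂, G y₁ y₂, G θ₁ θ₂, G u₁ u₂, G v₁ v₂,
    ⟨hGm hu₁m hu₂m, hGm hv₁m hv₂m, ?_, ?_, ?_⟩,
    if_pos hT₁, if_pos hT₁, if_pos hT₁, hend _ _ hx, hend _ _ hy, hend _ _ hθ⟩
  · -- bounds
    filter_upwards [hb₁, hb₂'] with t h1 h2 ht
    by_cases hc : t ≤ T₁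
    · simpa [hG, hc] using h1 ⟨ht.1, hc⟩
    · simpa [hG, hc] using h2 ⟨by linarith [not_le.1 hc], by linarith [ht.2]⟩
  · -- Lipschitz
    refine ⟨max K₁ K₂, ?_⟩
    have hK1 : (K₁ : ℝ) ≤ ((max K₁ K₂ : ℝ≥0) : ℝ) := by exact_mod_cast le_max_left K₁ K₂
    have hK2 : (K₂ : ℝ) ≤ ((max K₁ K₂ : ℝ≥0) : ℝ) := by exact_mod_cast le_max_right K₁ K₂
    have hdl1 := hK₁.dist_le_mul
    have hdl2 := hK₂.dist_le_mul
    have key : ∀ a ∈ Icc (0:ℝ) (T₁+T₂), ∀ b ∈ Icc (0:ℝ) (T₁+T₂), a ≤ b →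
        dist ((G x₁ x₂ b, G y₁ y₂ b, G θ₁ θ₂ b)) ((G x₁ x₂ a, G y₁ y₂ a, G θ₁ θ₂ a))
          ≤ ((max K₁ K₂ : ℝ≥0) : ℝ) * (b - a) := by
      intro a ha b hb hab
      by_cases hbT : b ≤ T₁
      · have haT : a ≤ T₁ := le_trans hab hbT
        have e := hdl1 b ⟨hb.1, hbT⟩ a ⟨ha.1, haT⟩
        rw [Real.dist_eq, abs_of_nonneg (by linarith)] at e
        have hFb : ((G x₁ x₂ b, G y₁ y₂ b, G θ₁ θ₂ b) : ℝ × ℝ × ℝ)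
            = (x₁ b, y₁ b, θ₁ b) := by simp [hG, hbT]
        have hFa : ((G x₁ x₂ a, G y₁ y₂ a, G θ₁ θ₂ a) : ℝ × ℝ × ℝ)
            = (x₁ a, y₁ a, θ₁ a) := by simp [hG, haT]
        rw [hFb, hFa]
        refine e.trans ?_
        have hba : (0:ℝ) ≤ b - a := by linarith
        exact mul_le_mul_of_nonneg_right hK1 hba
      · have hbT' : T₁ < b := not_le.1 hbT
        have hFb : ((G x₁ x₂ b, G y₁ y₂ b, G θ₁ θ₂ b) : ℝ × ℝ × ℝ)
            = (x₂ (b - T₁), y₂ (b - T₁), θ₂ (b - T₁)) := by simp [hG, hbT]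
        by_cases haT : a ≤ T₁
        · have e1 := hdl2 (b - T₁) ⟨by linarith, by linarith [hb.2]⟩ 0 ⟨le_refl _, hT₂⟩
          have e2 := hdl1 T₁ ⟨hT₁, le_refl _⟩ a ⟨ha.1, haT⟩
          rw [Real.dist_eq, abs_of_nonneg (by linarith)] at e1
          rw [Real.dist_eq, abs_of_nonneg (by linarith)] at e2
          simp only [sub_zero] at e1
          have hFa : ((G x₁ x₂ a, G y₁ y₂ a, G θ₁ θ₂ a) : ℝ × ℝ × ℝ)
              = (x₁ a, y₁ a, θ₁ a) := by simp [hG, haT]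
          rw [hFb, hFa]
          rw [hx, hy, hθ] at e2
          calc dist ((x₂ (b - T₁), y₂ (b - T₁), θ₂ (b - T₁)) : ℝ × ℝ × ℝ) (x₁ a, y₁ a, θ₁ a)
              ≤ dist ((x₂ (b - T₁), y₂ (b - T₁), θ₂ (b - T₁)) : ℝ × ℝ × ℝ) (x₂ 0, y₂ 0, θ₂ 0)
                + dist ((x₂ 0, y₂ 0, θ₂ 0) : ℝ × ℝ × ℝ) (x₁ a, y₁ a, θ₁ a) := dist_triangle _ _ _
            _ ≤ (K₂ : ℝ) * (b - T₁) + (K₁ : ℝ) * (T₁ - a) := add_le_add e1 e2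
            _ ≤ ((max K₁ K₂ : ℝ≥0) : ℝ) * (b - a) := by nlinarith
        · have haT' : T₁ < a := not_le.1 haT
          have e := hdl2 (b - T₁) ⟨by linarith, by linarith [hb.2]⟩ (a - T₁)
            ⟨by linarith, by linarith [ha.2]⟩
          rw [Real.dist_eq, abs_of_nonneg (by linarith)] at e
          have hFa : ((G x₁ x₂ a, G y₁ y₂ a, G θ₁ θ₂ a) : ℝ × ℝ × ℝ)
              = (x₂ (a - T₁), y₂ (a - T₁), θ₂ (a - T₁)) := by simp [hG, haT]
          rw [hFb, hFa]
          have : b - T₁ - (a - T₁) = b - a := by ring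
          rw [this] at e
          refine e.trans (mul_le_mul_of_nonneg_right hK2 (by linarith))
    rw [lipschitzOnWith_iff_dist_le_mul]
    intro p hp q hq
    rcases le_total p q with hpq | hqp
    · rw [dist_comm]
      refine (key p hp q hq hpq).trans ?_
      rw [Real.dist_eq, abs_of_nonpos (by linarith), neg_sub]
    · refine (key q hq p hp hqp).trans ?_
      rw [Real.dist_eq, abs_of_nonneg (by linarith)]
  · -- derivatives
    filter_upwards [hd₁, hd₂', hne] with t h1 h2 hnet ht
    rcases lt_or_gt_of_ne hnet with hlt | hgt
    · obtain ⟨e1, e2, e3⟩ := h1 ⟨ht.1, hlt.le⟩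
      have hvv : G v₁ v₂ t = v₁ t := if_pos hlt.le
      have hθθ : G θ₁ θ₂ t = θ₁ t := if_pos hlt.le
      have huu : G u₁ u₂ t = u₁ t := if_pos hlt.le
      rw [hvv, hθθ, huu]
      exact ⟨glue_left hlt e1, glue_left hlt e2, glue_left hlt e3⟩
    · obtain ⟨e1, e2, e3⟩ := h2 ⟨by linarith, by linarith [ht.2]⟩
      have hc : ¬ t ≤ T₁ := not_le.2 hgt
      have hvv : G v₁ v₂ t = v₂ (t - T₁) := if_neg hc
      have hθθ : G θ₁ θ₂ t = θ₂ (t - T₁) := if_neg hc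
      have huu : G u₁ u₂ t = u₂ (t - T₁) := if_neg hc
      rw [hvv, hθθ, huu]
      exact ⟨glue_right hgt e1, glue_right hgt e2, glue_right hgt e3⟩

/-- Complete controllability of the Dubins system: any two points of `ℝ³` can be joined
by an admissible trajectory. -/
theorem dubins_controllable (umax vmin vmax : ℝ)
    (humax : 0 < umax) (hvmin : 0 < vmin) (hv : vmin ≤ vmax)
    (q₀ q₁ : ℝ × ℝ × ℝ) :
    ∃ T : ℝ, 0 ≤ T ∧ ∃ x y θ u v : ℝ → ℝ,
      DubinsTraj umax vmin vmax T x y θ u v ∧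
      (x 0, y 0, θ 0) = q₀ ∧ (x T, y T, θ T) = q₁ := by
  obtain ⟨X0, Y0, Th0⟩ := q₀
  obtain ⟨X1, Y1, Th1⟩ := q₁
  have hu0 : umax ≠ 0 := humax.ne'
  have hv0 : vmin ≠ 0 := hvmin.ne'
  have hπ : (0:ℝ) < 2 * Real.pi := by positivity
  obtain ⟨Δx, hΔx⟩ : ∃ a : ℝ, a = X1 - X0 - (vmin/umax) * (Real.sin Th1 - Real.sin Th0) := ⟨_, rfl⟩
  obtain ⟨Δy, hΔy⟩ : ∃ a : ℝ, a = Y1 - Y0 + (vmin/umax) * (Real.cos Th1 - Real.cos Th0) := ⟨_, rfl⟩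
  obtain ⟨z, hz⟩ : ∃ w : ℂ, w = (⟨Δx, Δy⟩ : ℂ) := ⟨_, rfl⟩
  obtain ⟨d, hd⟩ : ∃ a : ℝ, a = ‖z‖ := ⟨_, rfl⟩
  have hd0 : 0 ≤ d := hd ▸ norm_nonneg z
  obtain ⟨m, hm⟩ : ∃ k : ℤ, k = ⌈(Th0 - z.arg) / (2 * Real.pi)⌉ := ⟨_, rfl⟩
  obtain ⟨φ, hφ⟩ : ∃ a : ℝ, a = z.arg + 2 * Real.pi * (m : ℝ) := ⟨_, rfl⟩
  have h0φ : Th0 ≤ φ := by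
    have h1 := Int.le_ceil ((Th0 - z.arg) / (2 * Real.pi))
    rw [← hm] at h1
    rw [div_le_iff₀ hπ] at h1
    rw [hφ]; linarith
  have hcφ : Real.cos φ = Real.cos z.arg := by
    rw [hφ, show z.arg + 2 * Real.pi * (m:ℝ) = z.arg + (m:ℝ) * (2*Real.pi) by ring]
    exact Real.cos_add_int_mul_two_pi _ m
  have hsφ : Real.sin φ = Real.sin z.arg := by
    rw [hφ, show z.arg + 2 * Real.pi * (m:ℝ) = z.arg + (m:ℝ) * (2*Real.pi) by ring]
    exact Real.sin_add_int_mul_two_pi _ m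
  have hdc : d * Real.cos φ = Δx := by
    rw [hd, hcφ, hz]; exact Complex.norm_mul_cos_arg _
  have hds : d * Real.sin φ = Δy := by
    rw [hd, hsφ, hz]; exact Complex.norm_mul_sin_arg _
  obtain ⟨n, hn⟩ : ∃ k : ℤ, k = max 0 ⌈(φ - Th1) / (2 * Real.pi)⌉ := ⟨_, rfl⟩
  obtain ⟨ψ, hψ⟩ : ∃ a : ℝ, a = Th1 + 2 * Real.pi * (n : ℝ) := ⟨_, rfl⟩
  have hφψ : φ ≤ ψ := by
    have h1 := Int.le_ceil ((φ - Th1) / (2 * Real.pi))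
    have h2 : (⌈(φ - Th1) / (2 * Real.pi)⌉ : ℝ) ≤ (n : ℝ) := by
      rw [hn]; exact_mod_cast le_max_right _ _
    rw [div_le_iff₀ hπ] at h1
    rw [hψ]; nlinarith
  have h1ψ : Th1 ≤ ψ := by
    have h2 : (0:ℝ) ≤ (n : ℝ) := by rw [hn]; exact_mod_cast le_max_left _ _
    rw [hψ]; nlinarith
  have hsψ : Real.sin ψ = Real.sin Th1 := by
    rw [hψ, show Th1 + 2 * Real.pi * (n:ℝ) = Th1 + (n:ℝ) * (2*Real.pi) by ring]
    exact Real.sin_add_int_mul_two_pi _ n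
  have hcψ : Real.cos ψ = Real.cos Th1 := by
    rw [hψ, show Th1 + 2 * Real.pi * (n:ℝ) = Th1 + (n:ℝ) * (2*Real.pi) by ring]
    exact Real.cos_add_int_mul_two_pi _ n
  obtain ⟨τA, hτA⟩ : ∃ a : ℝ, a = (φ - Th0)/umax := ⟨_, rfl⟩
  obtain ⟨τB, hτB⟩ : ∃ a : ℝ, a = d/vmin := ⟨_, rfl⟩
  obtain ⟨τC, hτC⟩ : ∃ a : ℝ, a = (ψ - φ)/umax := ⟨_, rfl⟩
  obtain ⟨τD, hτD⟩ : ∃ a : ℝ, a = (ψ - Th1)/umax := ⟨_, rfl⟩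
  have hτA0 : 0 ≤ τA := by rw [hτA]; exact div_nonneg (by linarith) humax.le
  have hτB0 : 0 ≤ τB := by rw [hτB]; exact div_nonneg hd0 hvmin.le
  have hτC0 : 0 ≤ τC := by rw [hτC]; exact div_nonneg (by linarith) humax.le
  have hτD0 : 0 ≤ τD := by rw [hτD]; exact div_nonneg (by linarith) humax.le
  obtain ⟨XA, hXA⟩ : ∃ a : ℝ, a = X0 + (vmin/umax) * (Real.sin φ - Real.sin Th0) := ⟨_, rfl⟩
  obtain ⟨YA, hYA⟩ : ∃ a : ℝ, a = Y0 - (vmin/umax) * (Real.cos φ - Real.cos Th0) := ⟨_, rfl⟩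
  obtain ⟨XB, hXB⟩ : ∃ a : ℝ, a = XA + Δx := ⟨_, rfl⟩
  obtain ⟨YB, hYB⟩ : ∃ a : ℝ, a = YA + Δy := ⟨_, rfl⟩
  obtain ⟨XC, hXC⟩ : ∃ a : ℝ, a = XB + (vmin/umax) * (Real.sin ψ - Real.sin φ) := ⟨_, rfl⟩
  obtain ⟨YC, hYC⟩ : ∃ a : ℝ, a = YB - (vmin/umax) * (Real.cos ψ - Real.cos φ) := ⟨_, rfl⟩
  have headA : Th0 + 1*umax*τA = φ := by rw [hτA]; field_simp; ring
  have headC : φ + 1*umax*τC = ψ := by rw [hτC]; field_simp; ring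
  have headD : ψ + (-1)*umax*τD = Th1 := by rw [hτD]; field_simp; ring
  have SA := dubins_arc (vmax := vmax) humax hvmin hv X0 Y0 Th0 1 τA (Or.inl rfl) hτA0
  have SB := dubins_line (umax := umax) humax hvmin hv XA YA φ τB
  have SC := dubins_arc (vmax := vmax) humax hvmin hv XB YB φ 1 τC (Or.inl rfl) hτC0
  have SD := dubins_arc (vmax := vmax) humax hvmin hv XC YC ψ (-1) τD (Or.inr rfl) hτD0
  have e1x : arcX umax vmin X0 Th0 1 τA = lineX vmin XA φ 0 := by
    simp only [arcX, lineX]; rw [headA, hXA]; ring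
  have e1y : arcY umax vmin Y0 Th0 1 τA = lineY vmin YA φ 0 := by
    simp only [arcY, lineY]; rw [headA, hYA]; ring
  have e1θ : arcΘ umax Th0 1 τA = (fun _ : ℝ => φ) 0 := by
    simp only [arcΘ]; exact headA
  obtain ⟨g1x, g1y, g1θ, g1u, g1v, H1, s1x, s1y, s1θ, f1x, f1y, f1θ⟩ :=
    dubins_concat hτA0 hτB0 SA SB e1x e1y e1θ
  have e2x : g1x (τA + τB) = arcX umax vmin XB φ 1 0 := by
    rw [f1x]
    simp only [lineX, arcX, mul_zero, add_zero, sub_self]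
    rw [hτB, hXB]
    have : vmin * Real.cos φ * (d / vmin) = d * Real.cos φ := by field_simp
    rw [this, hdc]
  have e2y : g1y (τA + τB) = arcY umax vmin YB φ 1 0 := by
    rw [f1y]
    simp only [lineY, arcY, mul_zero, add_zero, sub_self]
    rw [hτB, hYB]
    have : vmin * Real.sin φ * (d / vmin) = d * Real.sin φ := by field_simp
    rw [this, hds]
    ring
  have e2θ : g1θ (τA + τB) = arcΘ umax φ 1 0 := by
    rw [f1θ]; simp [arcΘ]
  obtain ⟨g2x, g2y, g2θ, g2u, g2v, H2, s2x, s2y, s2θ, f2x, f2y, f2θ⟩ :=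
    dubins_concat (add_nonneg hτA0 hτB0) hτC0 H1 SC e2x e2y e2θ
  have e3x : g2x (τA + τB + τC) = arcX umax vmin XC ψ (-1) 0 := by
    rw [f2x]
    simp only [arcX, mul_zero, add_zero, sub_self]
    rw [headC, hXC]
    ring
  have e3y : g2y (τA + τB + τC) = arcY umax vmin YC ψ (-1) 0 := by
    rw [f2y]
    simp only [arcY, mul_zero, add_zero, sub_self]
    rw [headC, hYC]
    ring
  have e3θ : g2θ (τA + τB + τC) = arcΘ umax ψ (-1) 0 := by
    rw [f2θ]; simp only [arcΘ, mul_zero, add_zero]; exact headC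
  obtain ⟨g3x, g3y, g3θ, g3u, g3v, H3, s3x, s3y, s3θ, f3x, f3y, f3θ⟩ :=
    dubins_concat (add_nonneg (add_nonneg hτA0 hτB0) hτC0) hτD0 H2 SD e3x e3y e3θ
  refine ⟨τA + τB + τC + τD, by positivity, g3x, g3y, g3θ, g3u, g3v, H3, ?_, ?_⟩
  · rw [Prod.mk.injEq, Prod.mk.injEq]
    rw [s3x, s2x, s1x, s3y, s2y, s1y, s3θ, s2θ, s1θ]
    simp [arcX, arcY, arcΘ]
  · rw [Prod.mk.injEq, Prod.mk.injEq]
    rw [f3x, f3y, f3θ]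
    simp only [arcX, arcY, arcΘ]
    rw [headD]
    refine ⟨?_, ?_, rfl⟩
    · rw [hXC, hXB, hXA, hΔx, hsψ]; ring
    · rw [hYC, hYB, hYA, hΔy, hcψ]; ring
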